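/- Let P be a d-dimensional convex polytope, let h ∈ ℝ^d be a fixed vector such that every line with direction vector h meets ∂P in finitely many points, and let P^h be the half-open counterpart of P. Then P^h k-tiles ℝ^d with a discrete multiset Λ if and only if L^h_Λ(v) = k for every v ∈ ℝ^d. -/

import Mathlib

open Set Pointwise

noncomputable section

abbrev Euc (d : ℕ) : Type := EuclideanSpace ℝ (Fin d)

/-- A "discrete multiset" of vectors: a multiplicity function with locally finite support. -/
def IsDiscreteMultiset {d : ℕ} (m : Euc d → ℕ) : Prop :=
  ∀ x : Euc d, ∃ U ∈ nhds x, {y : Euc d | y ∈ U ∧ m y ≠ 0}.Finite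

/-- `∑_{λ∈Λ} 1_{P+λ}(v)`, counted with multiplicity. -/
def coverCount {d : ℕ} (m : Euc d → ℕ) (P : Set (Euc d)) (v : Euc d) : ℕ :=
  ∑ᶠ l : Euc d, m l * P.indicator 1 (v - l)

/-- The set `∂P + Λ`. -/
def boundarySum {d : ℕ} (P : Set (Euc d)) (m : Euc d → ℕ) : Set (Euc d) :=
  {x : Euc d | ∃ l : Euc d, m l ≠ 0 ∧ x - l ∈ frontier P}

/-- `P` `k`-tiles `ℝ^d` with the discrete multiset `m`: every point not in `∂P + Λ`
is covered exactly `k` times. -/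
def Tiles {d : ℕ} (P : Set (Euc d)) (m : Euc d → ℕ) (k : ℕ) : Prop :=
  ∀ v : Euc d, v ∉ boundarySum P m → coverCount m P v = k

/-- A lattice in ℝ^d: a discrete additive subgroup of full rank, viewed as a set. -/
def IsLattice {d : ℕ} (L : Set (Euc d)) : Prop :=
  ∃ H : AddSubgroup (Euc d), L = (H : Set (Euc d)) ∧
    DiscreteTopology H ∧ Submodule.span ℝ (H : Set (Euc d)) = ⊤

/-- A set viewed as a multiset with all multiplicities one. -/
def setMult {d : ℕ} (L : Set (Euc d)) : Euc d → ℕ := L.indicator 1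

/-- A convex polytope: convex hull of a finite set of points, with nonempty interior. -/
def IsConvexPolytope {d : ℕ} (P : Set (Euc d)) : Prop :=
  (∃ S : Set (Euc d), S.Finite ∧ P = convexHull ℝ S) ∧ (interior P).Nonempty

/-- The half-open counterpart `P^h` of `P` with respect to the direction `h`. -/
def halfOpen {d : ℕ} (P : Set (Euc d)) (h : Euc d) : Set (Euc d) :=
  {v : Euc d | v ∈ closure P ∧
    ∃ ε : ℝ, 0 < ε ∧ ∀ c : ℝ, 0 < c → c < ε → v + c • h ∈ interior P}

/-- Every line with direction `h` meets `∂P` in finitely many points. -/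
def GoodDirection {d : ℕ} (P : Set (Euc d)) (h : Euc d) : Prop :=
  ∀ x : Euc d, {c : ℝ | x + c • h ∈ frontier P}.Finite

/-- `P^h` `k`-tiles `ℝ^d` with the discrete multiset `m`. -/
def TilesHalfOpen {d : ℕ} (P : Set (Euc d)) (h : Euc d) (m : Euc d → ℕ) (k : ℕ) : Prop :=
  ∀ v : Euc d, v ∉ boundarySum P m → coverCount m (halfOpen P h) v = k

/-- `L_Λ(v) = #(Λ ∩ (−1·P + v))`, counted with multiplicity. -/
def LEnum {d : ℕ} (m : Euc d → ℕ) (P : Set (Euc d)) (v : Euc d) : ℕ :=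
  ∑ᶠ l : Euc d, m l * Set.indicator (v +ᵥ ((-1 : ℝ) • P)) 1 l

/-- `L^h_Λ(v) = #(Λ ∩ (−1·P^h + v))`, counted with multiplicity. -/
def LEnumH {d : ℕ} (m : Euc d → ℕ) (P : Set (Euc d)) (h : Euc d) (v : Euc d) : ℕ :=
  LEnum m (halfOpen P h) v

section Helpers

variable {d : ℕ}

/-- Points of a discrete multiset in a compact set are finite. -/
lemma discrete_inter_compact_finite {m : Euc d → ℕ} (hm : IsDiscreteMultiset m)
    {K : Set (Euc d)} (hK : IsCompact K) : {l | l ∈ K ∧ m l ≠ 0}.Finite := by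
  choose U hU hfin using hm
  obtain ⟨t, -, ht⟩ := hK.elim_nhds_subcover U (fun x _ => hU x)
  refine Set.Finite.subset (t.finite_toSet.biUnion (fun x _ => hfin x)) ?_
  rintro l ⟨hlK, hlm⟩
  obtain ⟨x, hx, hxl⟩ := Set.mem_iUnion₂.1 (ht hlK)
  exact Set.mem_biUnion hx ⟨hxl, hlm⟩

lemma lenum_eq_coverCount (m : Euc d → ℕ) (Q : Set (Euc d)) (v : Euc d) :
    LEnum m Q v = coverCount m Q v := by
  unfold LEnum coverCount
  apply finsum_congr
  intro l
  congr 1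
  have : l ∈ v +ᵥ ((-1 : ℝ) • Q) ↔ v - l ∈ Q := by
    simp only [Set.mem_vadd_set, Set.mem_smul_set]
    constructor
    · rintro ⟨_, ⟨q, hq, rfl⟩, rfl⟩
      simpa using hq
    · intro hq
      exact ⟨(-1 : ℝ) • (v - l), ⟨v - l, hq, rfl⟩, by simp⟩
  by_cases hq : v - l ∈ Q
  · rw [Set.indicator_of_mem (this.2 hq), Set.indicator_of_mem hq]
    simp
  · rw [Set.indicator_of_notMem (fun hh => hq (this.1 hh)),
      Set.indicator_of_notMem hq]

lemma interior_subset_halfOpen (P : Set (Euc d)) (h : Euc d) :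
    interior P ⊆ halfOpen P h := by
  intro x hx
  refine ⟨subset_closure (interior_subset hx), ?_⟩
  obtain ⟨r, hr, hball⟩ := Metric.isOpen_iff.1 isOpen_interior x hx
  refine ⟨r / (‖h‖ + 1), by positivity, fun c hc hcr => hball ?_⟩
  have hn : ‖h‖ + 1 > 0 := by positivity
  have : dist (x + c • h) x = c * ‖h‖ := by
    rw [dist_eq_norm]
    simp [norm_smul, abs_of_pos hc]
  rw [Metric.mem_ball, this]
  have h1 : c * (‖h‖ + 1) < r := by
    calc c * (‖h‖ + 1) < (r / (‖h‖ + 1)) * (‖h‖ + 1) := by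
          exact mul_lt_mul_of_pos_right hcr hn
      _ = r := by field_simp
  nlinarith [norm_nonneg h]

lemma halfOpen_mem_iff_of_not_frontier {P : Set (Euc d)} {h : Euc d} {x : Euc d}
    (hx : x ∉ frontier P) : x ∈ halfOpen P h ↔ x ∈ interior P := by
  constructor
  · intro hxo
    have hcl : x ∈ closure P := hxo.1
    rw [frontier, Set.mem_diff] at hx
    push_neg at hx
    exact hx hcl
  · exact fun hxi => interior_subset_halfOpen P h hxi

/-- For a finite set of reals there is a positive δ such that (0,δ) avoids it. -/
lemma exists_pos_Ioo_disjoint {s : Set ℝ} (hs : s.Finite) :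
    ∃ δ > 0, ∀ c ∈ Set.Ioo (0:ℝ) δ, c ∉ s := by
  classical
  have hs' : (s ∩ Set.Ioi 0).Finite := hs.inter_of_left _
  by_cases hne : (s ∩ Set.Ioi 0).Nonempty
  · have htne : hs'.toFinset.Nonempty := by
      rwa [Set.Finite.toFinset_nonempty]
    set a := hs'.toFinset.min' htne with ha
    have haa : a ∈ s ∩ Set.Ioi 0 := by
      have := hs'.toFinset.min'_mem htne
      rwa [Set.Finite.mem_toFinset] at this
    refine ⟨a, haa.2, fun c hc hcs => ?_⟩
    have : a ≤ c := hs'.toFinset.min'_le c (by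
      rw [Set.Finite.mem_toFinset]; exact ⟨hcs, hc.1⟩)
    linarith [hc.2]
  · exact ⟨1, one_pos, fun c hc hcs => hne ⟨c, hcs, hc.1⟩⟩

/-- The key dichotomy: membership in `halfOpen P h` is detected by a small shift. -/
lemma exists_delta_shift {P : Set (Euc d)} {h : Euc d} (hdir : GoodDirection P h)
    (x : Euc d) :
    ∃ δ > 0, ∀ c ∈ Set.Ioo (0:ℝ) δ, (x ∈ halfOpen P h ↔ x + c • h ∈ interior P) := by
  by_cases hx : x ∈ halfOpen P h
  · obtain ⟨ε, hε, hεp⟩ := hx.2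
    exact ⟨ε, hε, fun c hc => ⟨fun _ => hεp c hc.1 hc.2, fun _ => hx⟩⟩
  · obtain ⟨δ, hδ, hav⟩ := exists_pos_Ioo_disjoint (hdir x)
    refine ⟨δ, hδ, fun c hc => ⟨fun hx' => absurd hx' hx, fun hci => absurd ?_ hx⟩⟩
    -- use connectivity to show the whole segment is in the interior
    have hseg : ∀ c' ∈ Set.Ioo (0:ℝ) δ, x + c' • h ∈ interior P := by
      intro c' hc'
      set f : ℝ → Euc d := fun t => x + t • h with hf
      have hcont : Continuous f := by continuity
      have hconn : IsPreconnected (f '' Set.Ioo (0:ℝ) δ) :=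
        (isPreconnected_Ioo).image f hcont.continuousOn
      by_contra hnot
      have hsub : f '' Set.Ioo (0:ℝ) δ ⊆ interior P ∪ (closure P)ᶜ := by
        rintro - ⟨t, ht, rfl⟩
        have hfr : f t ∉ frontier P := hav t ht
        rw [frontier, Set.mem_diff] at hfr
        push_neg at hfr
        by_cases hcl : f t ∈ closure P
        · exact Or.inl (hfr hcl)
        · exact Or.inr hcl
      have hne1 : (f '' Set.Ioo (0:ℝ) δ ∩ interior P).Nonempty :=
        ⟨f c, ⟨c, hc, rfl⟩, hci⟩
      have hne2 : (f '' Set.Ioo (0:ℝ) δ ∩ (closure P)ᶜ).Nonempty := by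
        refine ⟨f c', ⟨c', hc', rfl⟩, fun hcl => hnot ?_⟩
        have hfr' : f c' ∉ frontier P := hav c' hc'
        rw [frontier, Set.mem_diff] at hfr'
        push_neg at hfr'
        exact hfr' hcl
      obtain ⟨z, -, hz1, hz2⟩ := hconn (interior P) (closure P)ᶜ isOpen_interior
        isClosed_closure.isOpen_compl hsub hne1 hne2
      exact hz2 (subset_closure (interior_subset hz1))
    have hxcl : x ∈ closure P := by
      rw [Metric.mem_closure_iff]
      intro ε hε
      set c0 : ℝ := min (δ / 2) (ε / (‖h‖ + 1)) with hc0
      have hc0pos : 0 < c0 := lt_min (by linarith) (by positivity)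
      have hc0δ : c0 < δ := lt_of_le_of_lt (min_le_left _ _) (by linarith)
      refine ⟨x + c0 • h, interior_subset (hseg c0 ⟨hc0pos, hc0δ⟩), ?_⟩
      have hd : dist x (x + c0 • h) = c0 * ‖h‖ := by
        rw [dist_eq_norm]
        simp [norm_smul, abs_of_pos hc0pos]
      rw [hd]
      have h2 : c0 ≤ ε / (‖h‖ + 1) := min_le_right _ _
      have h3 : (0:ℝ) < ‖h‖ + 1 := by positivity
      have h4 : c0 * (‖h‖ + 1) ≤ ε := by
        calc c0 * (‖h‖ + 1) ≤ (ε / (‖h‖ + 1)) * (‖h‖ + 1) :=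
              mul_le_mul_of_nonneg_right h2 (le_of_lt h3)
          _ = ε := by field_simp
      nlinarith [norm_nonneg h]
    exact ⟨hxcl, δ, hδ, fun c' h1 h2 => hseg c' ⟨h1, h2⟩⟩

lemma finset_exists_pos_le {α : Type*} (s : Finset α) (f : α → ℝ)
    (hf : ∀ a ∈ s, 0 < f a) : ∃ δ > 0, ∀ a ∈ s, δ ≤ f a := by
  classical
  induction s using Finset.induction with
  | empty => exact ⟨1, one_pos, by simp⟩
  | @insert a s hx ih =>
    obtain ⟨δ, hδ, hle⟩ := ih (fun b hb => hf b (Finset.mem_insert_of_mem hb))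
    refine ⟨min δ (f a), lt_min hδ (hf a (Finset.mem_insert_self a s)), ?_⟩
    intro b hb
    rcases Finset.mem_insert.1 hb with rfl | hb
    · exact min_le_right _ _
    · exact le_trans (min_le_left _ _) (hle b hb)

end Helpers

/-- `P^h` `k`-tiles ℝ^d with Λ iff `L^h_Λ(v) = k` for every `v ∈ ℝ^d`. -/
theorem stmt_6 {d : ℕ} (P : Set (Euc d)) (hP : IsConvexPolytope P)
    (h : Euc d) (hdir : GoodDirection P h)
    (k : ℕ) (hk : 0 < k) (Λ : Euc d → ℕ) (hΛ : IsDiscreteMultiset Λ) :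
    TilesHalfOpen P h Λ k ↔ ∀ v : Euc d, LEnumH Λ P h v = k := by
  classical
  have key : ∀ v, LEnumH Λ P h v = coverCount Λ (halfOpen P h) v :=
    fun v => lenum_eq_coverCount _ _ _
  constructor
  · intro hTile v
    rw [key]
    obtain ⟨⟨S, hSfin, hPS⟩, hInt⟩ := hP
    have hPc : IsCompact P := by rw [hPS]; exact hSfin.isCompact_convexHull (𝕜 := ℝ)
    have hPcl : closure P = P := hPc.isClosed.closure_eq
    obtain ⟨R, hR⟩ := hPc.isBounded.subset_closedBall 0
    set K := Metric.closedBall v (R + 1) with hK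
    have hTfin : {l | l ∈ K ∧ Λ l ≠ 0}.Finite :=
      discrete_inter_compact_finite hΛ (isCompact_closedBall _ _)
    set T := hTfin.toFinset with hTdef
    choose δf hδf hδiff using fun l : Euc d => exists_delta_shift hdir (v - l)
    obtain ⟨δ₁, hδ₁, hδ₁le⟩ := finset_exists_pos_le T δf (fun l _ => hδf l)
    set δ := min δ₁ (1 / (‖h‖ + 1)) with hδdef
    have hδpos : 0 < δ := lt_min hδ₁ (by positivity)
    set B := ⋃ l ∈ T, {c : ℝ | (v - l) + c • h ∈ frontier P} with hB
    have hBfin : B.Finite := Set.Finite.biUnion T.finite_toSet (fun l _ => hdir (v - l))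
    obtain ⟨c, hcI, hcB⟩ : (Set.Ioo (0:ℝ) δ \ B).Nonempty :=
      ((Set.Ioo_infinite hδpos).diff hBfin).nonempty
    have hch : c * ‖h‖ ≤ 1 := by
      have hlt : c < 1 / (‖h‖ + 1) := lt_of_lt_of_le hcI.2 (min_le_right _ _)
      have h3 : (0:ℝ) < ‖h‖ + 1 := by positivity
      have h4 : c * (‖h‖ + 1) < 1 := by
        have h5 := mul_lt_mul_of_pos_right hlt h3
        rwa [one_div_mul_cancel (ne_of_gt h3)] at h5
      nlinarith [norm_nonneg h, hcI.1]
    set v' := v + c • h with hv'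
    -- membership in `closure P` forces membership in `T`
    have hmemT : ∀ l : Euc d, Λ l ≠ 0 → v' - l ∈ P → l ∈ T := by
      intro l hl hmem
      rw [hTdef, Set.Finite.mem_toFinset]
      refine ⟨?_, hl⟩
      have h1 : ‖v' - l‖ ≤ R := by simpa [dist_eq_norm] using hR hmem
      have h2 : dist l v ≤ ‖v' - l‖ + c * ‖h‖ := by
        have : l - v = -(v' - l) + c • h := by rw [hv']; abel
        rw [dist_eq_norm, this]
        calc ‖-(v' - l) + c • h‖ ≤ ‖-(v' - l)‖ + ‖c • h‖ := norm_add_le _ _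
          _ = ‖v' - l‖ + c * ‖h‖ := by rw [norm_neg, norm_smul, Real.norm_eq_abs,
              abs_of_pos hcI.1]
      exact Metric.mem_closedBall.2 (by linarith)
    have hmemT' : ∀ l : Euc d, Λ l ≠ 0 → v - l ∈ P → l ∈ T := by
      intro l hl hmem
      rw [hTdef, Set.Finite.mem_toFinset]
      refine ⟨?_, hl⟩
      have h1 : ‖v - l‖ ≤ R := by simpa [dist_eq_norm] using hR hmem
      have h2 : dist l v = ‖v - l‖ := by rw [dist_eq_norm, ← norm_neg]; congr 1; abel
      exact Metric.mem_closedBall.2 (by linarith)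
    have hho_sub : halfOpen P h ⊆ P := fun x hx => hPcl ▸ hx.1
    -- v' avoids the boundary sum
    have hv'good : v' ∉ boundarySum P Λ := by
      rintro ⟨l, hl, hfr⟩
      have hfrP : v' - l ∈ P := hPcl ▸ hfr.1
      have hlT : l ∈ T := hmemT l hl hfrP
      refine hcB ?_
      refine Set.mem_biUnion hlT ?_
      show (v - l) + c • h ∈ frontier P
      have : (v - l) + c • h = v' - l := by rw [hv']; abel
      rw [this]; exact hfr
    -- both cover counts are sums over T
    have hsum1 : coverCount Λ (halfOpen P h) v
        = ∑ l ∈ T, Λ l * (halfOpen P h).indicator 1 (v - l) := by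
      apply finsum_eq_finset_sum_of_support_subset
      intro l hl
      have h1 : Λ l ≠ 0 := by
        intro hz; apply hl; simp [hz]
      have h2 : v - l ∈ halfOpen P h := by
        by_contra hzz; apply hl; simp [Set.indicator_of_notMem hzz]
      exact hmemT' l h1 (hho_sub h2)
    have hsum2 : coverCount Λ (halfOpen P h) v'
        = ∑ l ∈ T, Λ l * (halfOpen P h).indicator 1 (v' - l) := by
      apply finsum_eq_finset_sum_of_support_subset
      intro l hl
      have h1 : Λ l ≠ 0 := by
        intro hz; apply hl; simp [hz]
      have h2 : v' - l ∈ halfOpen P h := by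
        by_contra hzz; apply hl; simp [Set.indicator_of_notMem hzz]
      exact hmemT l h1 (hho_sub h2)
    have hcongr : ∀ l ∈ T,
        Λ l * (halfOpen P h).indicator 1 (v - l)
          = Λ l * (halfOpen P h).indicator 1 (v' - l) := by
      intro l hlT
      congr 1
      have hcδ : c ∈ Set.Ioo (0:ℝ) (δf l) :=
        ⟨hcI.1, lt_of_lt_of_le hcI.2 (le_trans (min_le_left _ _) (hδ₁le l hlT))⟩
      have hiff1 : v - l ∈ halfOpen P h ↔ (v - l) + c • h ∈ interior P :=
        hδiff l c hcδ
      have heq : (v - l) + c • h = v' - l := by rw [hv']; abel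
      have hnf : v' - l ∉ frontier P := by
        intro hfr
        refine hcB (Set.mem_biUnion hlT ?_)
        show (v - l) + c • h ∈ frontier P
        rw [heq]; exact hfr
      have hiff2 : v' - l ∈ halfOpen P h ↔ v' - l ∈ interior P :=
        halfOpen_mem_iff_of_not_frontier hnf
      have hiff : v - l ∈ halfOpen P h ↔ v' - l ∈ halfOpen P h := by
        rw [hiff1, heq, hiff2]
      by_cases hmem : v - l ∈ halfOpen P h
      · rw [Set.indicator_of_mem hmem, Set.indicator_of_mem (hiff.1 hmem)]
        simp
      · rw [Set.indicator_of_notMem hmem,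
          Set.indicator_of_notMem (fun hh => hmem (hiff.2 hh))]
    rw [hsum1, Finset.sum_congr rfl hcongr, ← hsum2]
    exact hTile v' hv'good
  · intro hL v _
    rw [← key]
    exact hL v
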